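/- Let ν₁, ν₂ : ℝ → (0,∞) be weights with m_i(r) = ∫_{−r}^{r} νᵢ → ∞, and suppose the quotient ν₁/ν₂ is bounded above and bounded below away from 0. Then a bounded continuous function φ : ℝ → ℝⁿ satisfies (1/m₁(r)) ∫_{−r}^{r} ‖φ‖ ν₁ → 0 if and only if (1/m₂(r)) ∫_{−r}^{r} ‖φ‖ ν₂ → 0; consequently WPAA(ℝ,ν₁) = WPAA(ℝ,ν₂). -/

import Mathlib

open Filter MeasureTheory

def AlmostAutomorphic {n : ℕ} (f : ℝ → (Fin n → ℝ)) : Prop :=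
  ∀ s : ℕ → ℝ, ∃ φ : ℕ → ℕ, StrictMono φ ∧ ∃ g : ℝ → (Fin n → ℝ),
    (∀ t : ℝ, Tendsto (fun k => f (t + s (φ k))) atTop (nhds (g t))) ∧
    (∀ t : ℝ, Tendsto (fun k => g (t - s (φ k))) atTop (nhds (f t)))

/-- the weighted ergodic space `WPAA₀(ℝ, ν)`. -/
def WPAA0 {n : ℕ} (ν : ℝ → ℝ) (φ : ℝ → (Fin n → ℝ)) : Prop :=
  Continuous φ ∧ (∃ C : ℝ, ∀ t, ‖φ t‖ ≤ C) ∧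
  Tendsto (fun r : ℝ =>
      (∫ s in (-r)..r, ‖φ s‖ * ν s) / (∫ s in (-r)..r, ν s)) atTop (nhds 0)

/-- `ν` is a bounded weight with positive infimum whose mass tends to infinity. -/
def WeightUB (ν : ℝ → ℝ) : Prop :=
  (∀ s, 0 < ν s) ∧ LocallyIntegrable ν volume ∧
  (∃ b : ℝ, ∀ s, ν s ≤ b) ∧ (∃ a : ℝ, 0 < a ∧ ∀ s, a ≤ ν s) ∧
  Tendsto (fun r : ℝ => ∫ s in (-r)..r, ν s) atTop atTop

lemma loc_ii (ν : ℝ → ℝ) (h : LocallyIntegrable ν volume) (a b : ℝ) :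
    IntervalIntegrable ν volume a b := by
  rw [intervalIntegrable_iff]
  exact h.integrableOn_isCompact isCompact_uIcc |>.mono_set Set.uIoc_subset_uIcc

lemma prod_ii {n : ℕ} (ν : ℝ → ℝ) (h : LocallyIntegrable ν volume)
    (φ : ℝ → (Fin n → ℝ)) (hφc : Continuous φ) (C : ℝ) (hφb : ∀ t, ‖φ t‖ ≤ C)
    (a b : ℝ) : IntervalIntegrable (fun s => ‖φ s‖ * ν s) volume a b := by
  rw [intervalIntegrable_iff]
  refine Integrable.bdd_mul ((intervalIntegrable_iff.mp (loc_ii ν h a b)))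
    (hφc.norm.aestronglyMeasurable.restrict) (c := C) (Filter.Eventually.of_forall fun x => ?_)
  simpa [abs_of_nonneg (norm_nonneg _)] using hφb x

lemma aux_dir {n : ℕ} (ν₁ ν₂ : ℝ → ℝ)
    (hν₂pos : ∀ s, 0 < ν₂ s)
    (hν₁loc : LocallyIntegrable ν₁ volume) (hν₂loc : LocallyIntegrable ν₂ volume)
    (hm₁ : Tendsto (fun r : ℝ => ∫ s in (-r)..r, ν₁ s) atTop atTop)
    (a b : ℝ) (ha : 0 < a) (hb : 0 < b)
    (hab : ∀ s, a * ν₂ s ≤ ν₁ s) (hab' : ∀ s, ν₁ s ≤ b * ν₂ s)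
    (φ : ℝ → (Fin n → ℝ)) (hφc : Continuous φ) (C : ℝ) (hφb : ∀ t, ‖φ t‖ ≤ C)
    (h1 : Tendsto (fun r : ℝ =>
        (∫ s in (-r)..r, ‖φ s‖ * ν₁ s) / (∫ s in (-r)..r, ν₁ s)) atTop (nhds 0)) :
    Tendsto (fun r : ℝ =>
        (∫ s in (-r)..r, ‖φ s‖ * ν₂ s) / (∫ s in (-r)..r, ν₂ s)) atTop (nhds 0) := by
  have hev : ∀ᶠ r : ℝ in atTop, (0:ℝ) ≤ r ∧ (0:ℝ) < ∫ s in (-r)..r, ν₁ s := by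
    filter_upwards [eventually_ge_atTop (0:ℝ), hm₁.eventually_gt_atTop 0] with r h0 h1
    exact ⟨h0, h1⟩
  apply squeeze_zero' (g := fun r => (b / a) * ((∫ s in (-r)..r, ‖φ s‖ * ν₁ s) / (∫ s in (-r)..r, ν₁ s)))
  · filter_upwards [hev] with r ⟨hr, _⟩
    apply div_nonneg
    · exact intervalIntegral.integral_nonneg (by linarith) fun u _ =>
        mul_nonneg (norm_nonneg _) (hν₂pos u).le
    · exact intervalIntegral.integral_nonneg (by linarith) fun u _ => (hν₂pos u).le
  · filter_upwards [hev] with r ⟨hr, hD1⟩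
    have hrr : -r ≤ r := by linarith
    set N1 := ∫ s in (-r)..r, ‖φ s‖ * ν₁ s
    set N2 := ∫ s in (-r)..r, ‖φ s‖ * ν₂ s
    set D1 := ∫ s in (-r)..r, ν₁ s
    set D2 := ∫ s in (-r)..r, ν₂ s
    have hN1 : 0 ≤ N1 := intervalIntegral.integral_nonneg hrr fun u _ =>
      mul_nonneg (norm_nonneg _)
        (le_of_lt (lt_of_lt_of_le (mul_pos ha (hν₂pos u)) (hab u)))
    have hN : N2 ≤ (1/a) * N1 := by
      have : (1/a) * N1 = ∫ s in (-r)..r, (1/a) * (‖φ s‖ * ν₁ s) := by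
        rw [intervalIntegral.integral_const_mul]
      rw [this]
      refine intervalIntegral.integral_mono_on hrr
        (prod_ii ν₂ hν₂loc φ hφc C hφb _ _)
        (((prod_ii ν₁ hν₁loc φ hφc C hφb (-r) r)).const_mul _) fun x _ => ?_
      have := hab x
      have hn := norm_nonneg (φ x)
      rw [div_mul_eq_mul_div, one_mul, le_div_iff₀ ha]
      nlinarith
    have hD : (1/b) * D1 ≤ D2 := by
      have : (1/b) * D1 = ∫ s in (-r)..r, (1/b) * ν₁ s := by
        rw [intervalIntegral.integral_const_mul]
      rw [this]
      refine intervalIntegral.integral_mono_on hrr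
        ((loc_ii ν₁ hν₁loc (-r) r).const_mul _)
        (loc_ii ν₂ hν₂loc _ _) fun x _ => ?_
      have := hab' x
      rw [div_mul_eq_mul_div, one_mul, div_le_iff₀ hb]
      nlinarith
    have hD1b : 0 < (1/b) * D1 := by positivity
    calc N2 / D2 ≤ ((1/a) * N1) / ((1/b) * D1) :=
          div_le_div₀ (by positivity) hN hD1b hD
      _ = (b / a) * (N1 / D1) := by field_simp
  · have := h1.const_mul (b / a)
    simpa using this

lemma main_iff {n : ℕ} (ν₁ ν₂ : ℝ → ℝ)
    (hν₁pos : ∀ s, 0 < ν₁ s) (hν₂pos : ∀ s, 0 < ν₂ s)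
    (hν₁loc : LocallyIntegrable ν₁ volume) (hν₂loc : LocallyIntegrable ν₂ volume)
    (hm₁ : Tendsto (fun r : ℝ => ∫ s in (-r)..r, ν₁ s) atTop atTop)
    (hm₂ : Tendsto (fun r : ℝ => ∫ s in (-r)..r, ν₂ s) atTop atTop)
    (hub : ∃ b : ℝ, ∀ s, ν₁ s / ν₂ s ≤ b)
    (hlb : ∃ a : ℝ, 0 < a ∧ ∀ s, a ≤ ν₁ s / ν₂ s)
    (φ : ℝ → (Fin n → ℝ)) (hφc : Continuous φ) (hφb : ∃ C : ℝ, ∀ t, ‖φ t‖ ≤ C) :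
    (Tendsto (fun r : ℝ =>
        (∫ s in (-r)..r, ‖φ s‖ * ν₁ s) / (∫ s in (-r)..r, ν₁ s)) atTop (nhds 0))
      ↔
    (Tendsto (fun r : ℝ =>
        (∫ s in (-r)..r, ‖φ s‖ * ν₂ s) / (∫ s in (-r)..r, ν₂ s)) atTop (nhds 0)) := by
  obtain ⟨b, hb⟩ := hub
  obtain ⟨a, ha, hab⟩ := hlb
  obtain ⟨C, hC⟩ := hφb
  have hbpos : 0 < b := lt_of_lt_of_le ha ((hab 0).trans (hb 0))
  have h1 : ∀ s, a * ν₂ s ≤ ν₁ s := fun s => by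
    have := hab s; rw [le_div_iff₀ (hν₂pos s)] at this; linarith
  have h2 : ∀ s, ν₁ s ≤ b * ν₂ s := fun s => by
    have := hb s; rw [div_le_iff₀ (hν₂pos s)] at this; linarith
  constructor
  · exact aux_dir ν₁ ν₂ hν₂pos hν₁loc hν₂loc hm₁ a b ha hbpos h1 h2 φ hφc C hC
  · refine aux_dir ν₂ ν₁ hν₁pos hν₂loc hν₁loc hm₂ (1/b) (1/a)
      (by positivity) (by positivity) (fun s => ?_) (fun s => ?_) φ hφc C hC
    · rw [div_mul_eq_mul_div, one_mul, div_le_iff₀ hbpos]; linarith [h2 s]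
    · rw [div_mul_eq_mul_div, one_mul, le_div_iff₀ ha]; linarith [h1 s]

theorem stmt_10 {n : ℕ} (ν₁ ν₂ : ℝ → ℝ)
    (hν₁pos : ∀ s, 0 < ν₁ s) (hν₂pos : ∀ s, 0 < ν₂ s)
    (hν₁loc : LocallyIntegrable ν₁ volume) (hν₂loc : LocallyIntegrable ν₂ volume)
    (hm₁ : Tendsto (fun r : ℝ => ∫ s in (-r)..r, ν₁ s) atTop atTop)
    (hm₂ : Tendsto (fun r : ℝ => ∫ s in (-r)..r, ν₂ s) atTop atTop)
    (hub : ∃ b : ℝ, ∀ s, ν₁ s / ν₂ s ≤ b)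
    (hlb : ∃ a : ℝ, 0 < a ∧ ∀ s, a ≤ ν₁ s / ν₂ s)
    (φ : ℝ → (Fin n → ℝ)) (hφc : Continuous φ) (hφb : ∃ C : ℝ, ∀ t, ‖φ t‖ ≤ C) :
    ((Tendsto (fun r : ℝ =>
        (∫ s in (-r)..r, ‖φ s‖ * ν₁ s) / (∫ s in (-r)..r, ν₁ s)) atTop (nhds 0))
      ↔
     (Tendsto (fun r : ℝ =>
        (∫ s in (-r)..r, ‖φ s‖ * ν₂ s) / (∫ s in (-r)..r, ν₂ s)) atTop (nhds 0)))
    ∧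
    ({F : ℝ → (Fin n → ℝ) | ∃ g ψ, AlmostAutomorphic g ∧ WPAA0 ν₁ ψ ∧ ∀ t, F t = g t + ψ t}
      = {F : ℝ → (Fin n → ℝ) | ∃ g ψ, AlmostAutomorphic g ∧ WPAA0 ν₂ ψ ∧ ∀ t, F t = g t + ψ t}) := by
  have key := @main_iff n ν₁ ν₂ hν₁pos hν₂pos hν₁loc hν₂loc hm₁ hm₂ hub hlb
  refine ⟨key φ hφc hφb, ?_⟩
  ext F
  simp only [Set.mem_setOf_eq]
  constructor
  · rintro ⟨g, ψ, hg, ⟨hc, hB, ht⟩, hF⟩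
    exact ⟨g, ψ, hg, ⟨hc, hB, (key ψ hc hB).mp ht⟩, hF⟩
  · rintro ⟨g, ψ, hg, ⟨hc, hB, ht⟩, hF⟩
    exact ⟨g, ψ, hg, ⟨hc, hB, (key ψ hc hB).mpr ht⟩, hF⟩
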